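/- A cycle C_n (n ≥ 3) is a hypo-unique-domination graph if and only if n ≡ 1 (mod 3). -/

import Mathlib

open SimpleGraph

variable {V : Type*}

/-- `D` is a dominating set of `G`. -/
def IsDomSet (G : SimpleGraph V) (D : Finset V) : Prop :=
  ∀ v : V, ∃ u ∈ D, u = v ∨ G.Adj u v

/-- The domination number `γ(G)`. -/
noncomputable def domNum (G : SimpleGraph V) : ℕ :=
  sInf {n | ∃ D : Finset V, IsDomSet G D ∧ D.card = n}

/-- `D` is a minimum dominating set (γ-set) of `G`. -/
def IsGammaSet (G : SimpleGraph V) (D : Finset V) : Prop :=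
  IsDomSet G D ∧ D.card = domNum G

/-- The graph `G - x` obtained by deleting the vertex `x`. -/
def vdel (G : SimpleGraph V) (x : V) : SimpleGraph {u : V // u ≠ x} :=
  SimpleGraph.comap Subtype.val G

/-- `G` is a hypo-unique-domination graph: `G` has at least two γ-sets,
but `G - x` has a unique γ-set for every vertex `x`. -/
def HypoUD (G : SimpleGraph V) : Prop :=
  (∃ D₁ D₂ : Finset V, IsGammaSet G D₁ ∧ IsGammaSet G D₂ ∧ D₁ ≠ D₂) ∧
  ∀ x : V, ∃! D : Finset {u : V // u ≠ x}, IsGammaSet (vdel G x) D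

/-- `D` is an efficient dominating set of `G`: every vertex is dominated exactly once. -/
def IsEDS (G : SimpleGraph V) (D : Finset V) : Prop :=
  ∀ v : V, ∃! u : V, u ∈ D ∧ (u = v ∨ G.Adj u v)

/-- `G` is a hypo-efficient-domination graph: `G` has no EDS,
but `G - x` has an EDS for every vertex `x`. -/
def HypoED (G : SimpleGraph V) : Prop :=
  (¬ ∃ D : Finset V, IsEDS G D) ∧
  ∀ x : V, ∃ D : Finset {u : V // u ≠ x}, IsEDS (vdel G x) D

open Finset

section aux

section transfer

variable {W : Type*} {G : SimpleGraph V} {H : SimpleGraph W}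

lemma isDomSet_map (e : G ≃g H) {D : Finset V} (h : IsDomSet G D) :
    IsDomSet H (D.map e.toEquiv.toEmbedding) := by
  intro w
  obtain ⟨u, hu, hrel⟩ := h (e.symm w)
  refine ⟨e u, Finset.mem_map_of_mem _ hu, ?_⟩
  rcases hrel with h' | h'
  · left; rw [h']; exact e.apply_symm_apply w
  · right
    have : H.Adj (e u) (e (e.symm w)) := e.map_rel_iff.mpr h'
    rwa [e.apply_symm_apply] at this

lemma domNum_eq_of_iso (e : G ≃g H) : domNum G = domNum H := by
  unfold domNum
  congr 1
  ext n
  constructor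
  · rintro ⟨D, hD, rfl⟩
    exact ⟨D.map e.toEquiv.toEmbedding, isDomSet_map e hD, by simp⟩
  · rintro ⟨D, hD, rfl⟩
    exact ⟨D.map e.symm.toEquiv.toEmbedding, isDomSet_map e.symm hD, by simp⟩

lemma isGammaSet_map (e : G ≃g H) {D : Finset V} (h : IsGammaSet G D) :
    IsGammaSet H (D.map e.toEquiv.toEmbedding) := by
  refine ⟨isDomSet_map e h.1, ?_⟩
  rw [Finset.card_map, h.2, domNum_eq_of_iso e]

lemma existsUnique_gammaSet_of_iso (e : G ≃g H)
    (h : ∃! D : Finset V, IsGammaSet G D) :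
    ∃! D : Finset W, IsGammaSet H D := by
  obtain ⟨D₀, hD₀, huniq⟩ := h
  refine ⟨D₀.map e.toEquiv.toEmbedding, isGammaSet_map e hD₀, ?_⟩
  intro D' hD'
  have h1 : D'.map e.symm.toEquiv.toEmbedding = D₀ := huniq _ (isGammaSet_map e.symm hD')
  have := congrArg (fun s => s.map e.toEquiv.toEmbedding) h1
  simp only [Finset.map_map] at this
  rw [← this]
  refine (Finset.ext fun a => ?_).symm
  simp only [Finset.mem_map, Function.Embedding.trans_apply, Equiv.coe_toEmbedding]
  constructor
  · rintro ⟨b, hb, rfl⟩; simpa using hb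
  · intro ha; exact ⟨a, ha, by simp⟩


end transfer


lemma dom_count {V : Type*} [DecidableEq V] {G : SimpleGraph V}
    {D S : Finset V} {p : V → Prop} [DecidablePred p]
    (N : V → Finset V)
    (hD : IsDomSet G D)
    (hT : ∀ u ∈ D, ∀ v ∈ S, (u = v ∨ G.Adj u v) → p u)
    (hN3 : ∀ u, (N u).card ≤ 3)
    (hNc : ∀ u v, (u = v ∨ G.Adj u v) → v ∈ N u) :
    S.card ≤ 3 * (D.filter p).card := by
  have hsub : S ⊆ (D.filter p).biUnion N := by
    intro v hv
    obtain ⟨u, hu, hrel⟩ := hD v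
    exact Finset.mem_biUnion.mpr ⟨u, Finset.mem_filter.mpr ⟨hu, hT u hu v hv hrel⟩, hNc u v hrel⟩
  calc S.card ≤ ((D.filter p).biUnion N).card := Finset.card_le_card hsub
    _ ≤ ∑ u ∈ D.filter p, (N u).card := Finset.card_biUnion_le
    _ ≤ ∑ _u ∈ D.filter p, 3 := Finset.sum_le_sum fun u _ => hN3 u
    _ = 3 * (D.filter p).card := by rw [Finset.sum_const, smul_eq_mul, mul_comm]


lemma card_filter_val_lt (N c : ℕ) :
    ((Finset.univ : Finset (Fin N)).filter fun v => v.val < c).card = min c N := by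
  rw [← Finset.card_image_of_injective _ Fin.val_injective]
  have h1 : (((Finset.univ : Finset (Fin N)).filter fun v => v.val < c).image Fin.val)
      = (Finset.range N).filter (· < c) := by
    ext a
    simp only [Finset.mem_image, Finset.mem_filter, Finset.mem_range, Finset.mem_univ, true_and]
    constructor
    · rintro ⟨v, hv, rfl⟩; exact ⟨v.isLt, hv⟩
    · rintro ⟨ha, hc⟩; exact ⟨⟨a, ha⟩, hc, rfl⟩
  rw [h1]
  have h2 : (Finset.range N).filter (· < c) = Finset.range (min c N) := by
    ext a; simp only [Finset.mem_filter, Finset.mem_range, Nat.lt_min]; omega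
  rw [h2, Finset.card_range]

lemma card_filter_le_val (N c : ℕ) :
    ((Finset.univ : Finset (Fin N)).filter fun v => c ≤ v.val).card = N - c := by
  have h := Finset.card_filter_add_card_filter_not (s := (Finset.univ : Finset (Fin N)))
    (p := fun v => v.val < c)
  rw [card_filter_val_lt] at h
  have h2 : ((Finset.univ : Finset (Fin N)).filter fun v => ¬ v.val < c)
      = ((Finset.univ : Finset (Fin N)).filter fun v => c ≤ v.val) := by
    apply Finset.filter_congr; intro v _; simp [not_lt]
  rw [h2] at h
  have := Finset.card_fin N
  omega

-- path material
def pset (m : ℕ) (f : ℕ → ℕ) : Finset (Fin (m+1)) :=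
  (Finset.range ((m+3)/3)).image fun i =>
    ⟨min (f i) m, lt_of_le_of_lt (min_le_right _ _) (Nat.lt_succ_self m)⟩

def pN (m : ℕ) (u : Fin (m+1)) : Finset (Fin (m+1)) :=
  Finset.univ.filter fun v => v.val + 1 = u.val ∨ v.val = u.val ∨ v.val = u.val + 1

lemma pN_card (m : ℕ) (u : Fin (m+1)) : (pN m u).card ≤ 3 := by
  rw [← Finset.card_image_of_injective _ Fin.val_injective]
  have hsub : (pN m u).image Fin.val ⊆ ({u.val - 1, u.val, u.val + 1} : Finset ℕ) := by
    intro a ha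
    simp only [pN, Finset.mem_image, Finset.mem_filter, Finset.mem_univ, true_and] at ha
    obtain ⟨v, hv, rfl⟩ := ha
    simp only [Finset.mem_insert, Finset.mem_singleton]
    omega
  refine (Finset.card_le_card hsub).trans ?_
  have h1 := Finset.card_insert_le (u.val - 1) ({u.val, u.val+1} : Finset ℕ)
  have h2 := Finset.card_insert_le (u.val) ({u.val+1} : Finset ℕ)
  have h3 : ({u.val+1} : Finset ℕ).card = 1 := Finset.card_singleton _
  omega

lemma pN_mem (m : ℕ) (u v : Fin (m+1)) (h : u = v ∨ (pathGraph (m+1)).Adj u v) :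
    v ∈ pN m u := by
  simp only [pN, Finset.mem_filter, Finset.mem_univ, true_and]
  rcases h with rfl | h
  · omega
  · rw [pathGraph_adj] at h; omega

lemma path_dominator {m : ℕ} {D : Finset (Fin (m+1))} (hD : IsDomSet (pathGraph (m+1)) D)
    (v : Fin (m+1)) : ∃ w ∈ D, w.val = v.val ∨ w.val + 1 = v.val ∨ v.val + 1 = w.val := by
  obtain ⟨w, hw, hrel⟩ := hD v
  refine ⟨w, hw, ?_⟩
  rcases hrel with rfl | h
  · omega
  · rw [pathGraph_adj] at h; omega

lemma path_lower {m : ℕ} {D : Finset (Fin (m+1))} (hD : IsDomSet (pathGraph (m+1)) D) :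
    m + 1 ≤ 3 * D.card := by
  have h := dom_count (p := fun _ => True) (S := Finset.univ) (pN m) hD
    (fun _ _ _ _ _ => trivial) (pN_card m) (pN_mem m)
  simpa using h

lemma psetA_card (m : ℕ) : (pset m (fun i => 3*i+1)).card = (m+3)/3 := by
  rw [pset, Finset.card_image_of_injOn, Finset.card_range]
  intro i hi j hj hij
  simp only [Finset.coe_range, Set.mem_Iio] at hi hj
  simp only [Fin.mk.injEq] at hij
  omega

lemma psetA_dom (m : ℕ) : IsDomSet (pathGraph (m+1)) (pset m fun i => 3*i+1) := by
  intro v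
  refine ⟨⟨min (3*(v.val/3)+1) m, lt_of_le_of_lt (min_le_right _ _) (Nat.lt_succ_self m)⟩,
    Finset.mem_image.mpr ⟨v.val/3, Finset.mem_range.mpr (by omega), rfl⟩, ?_⟩
  have hv := v.isLt
  rw [Fin.ext_iff, pathGraph_adj]
  simp only [Fin.val_mk]
  omega

lemma psetB_card (m : ℕ) (h : (m+1) % 3 ≠ 0) : (pset m (fun i => 3*i)).card = (m+3)/3 := by
  rw [pset, Finset.card_image_of_injOn, Finset.card_range]
  intro i hi j hj hij
  simp only [Finset.coe_range, Set.mem_Iio] at hi hj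
  simp only [Fin.mk.injEq] at hij
  omega

lemma psetB_dom (m : ℕ) (h : (m+1) % 3 ≠ 0) : IsDomSet (pathGraph (m+1)) (pset m fun i => 3*i) := by
  intro v
  refine ⟨⟨min (3*((v.val+1)/3)) m, lt_of_le_of_lt (min_le_right _ _) (Nat.lt_succ_self m)⟩,
    Finset.mem_image.mpr ⟨(v.val+1)/3, Finset.mem_range.mpr (by have := v.isLt; omega), rfl⟩, ?_⟩
  have hv := v.isLt
  rw [Fin.ext_iff, pathGraph_adj]
  simp only [Fin.val_mk]
  omega

lemma psetB_ne_psetA (m : ℕ) (hm : 1 ≤ m) : pset m (fun i => 3*i) ≠ pset m (fun i => 3*i+1) := by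
  intro h
  have h0 : (⟨0, Nat.succ_pos m⟩ : Fin (m+1)) ∈ pset m (fun i => 3*i) := by
    refine Finset.mem_image.mpr ⟨0, Finset.mem_range.mpr (by omega), ?_⟩
    simp
  rw [h] at h0
  obtain ⟨i, _, hi⟩ := Finset.mem_image.mp h0
  rw [Fin.ext_iff] at hi
  simp only at hi
  omega

lemma path_domNum (m : ℕ) : domNum (pathGraph (m+1)) = (m+3)/3 := by
  apply le_antisymm
  · exact Nat.sInf_le ⟨pset m (fun i => 3*i+1), psetA_dom m, psetA_card m⟩
  · refine le_csInf ⟨(m+3)/3, ?_⟩ ?_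
    · exact ⟨pset m (fun i => 3*i+1), psetA_dom m, psetA_card m⟩
    rintro b ⟨D, hD, rfl⟩
    have := path_lower hD
    omega

lemma psetA_gamma (m : ℕ) : IsGammaSet (pathGraph (m+1)) (pset m fun i => 3*i+1) :=
  ⟨psetA_dom m, by rw [psetA_card, path_domNum]⟩

lemma psetB_gamma (m : ℕ) (h : (m+1) % 3 ≠ 0) :
    IsGammaSet (pathGraph (m+1)) (pset m fun i => 3*i) :=
  ⟨psetB_dom m h, by rw [psetB_card m h, path_domNum]⟩

lemma path_unique (m : ℕ) (h3 : (m+1) % 3 = 0) (hm : 2 ≤ m) :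
    ∃! D : Finset (Fin (m+1)), IsGammaSet (pathGraph (m+1)) D := by
  obtain ⟨k, hk⟩ : ∃ k, m + 1 = 3 * k := ⟨(m+1)/3, by omega⟩
  have hk1 : 1 ≤ k := by omega
  refine ⟨pset m (fun i => 3*i+1), psetA_gamma m, ?_⟩
  intro D hD
  have hdom := hD.1
  have hcard : D.card = k := by rw [hD.2, path_domNum]; omega
  -- lower bound on initial segments
  have hlow : ∀ j, j ≤ k → j ≤ (D.filter fun u : Fin (m+1) => u.val < 3*j).card := by
    intro j hj
    rcases Nat.eq_zero_or_pos j with rfl | hj0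
    · simp
    have h := dom_count (p := fun u : Fin (m+1) => u.val < 3*j)
      (S := Finset.univ.filter fun v : Fin (m+1) => v.val < 3*j - 1) (pN m) hdom
      ?_ (pN_card m) (pN_mem m)
    · rw [card_filter_val_lt] at h
      omega
    · intro u _ v hv hrel
      rw [Finset.mem_filter] at hv
      rcases hrel with rfl | hadj
      · omega
      · rw [pathGraph_adj] at hadj; omega
  -- upper: tail lower bound
  have hupp : ∀ j, j ≤ k → k - j ≤ (D.filter fun u : Fin (m+1) => 3*j ≤ u.val).card := by
    intro j hj
    rcases eq_or_lt_of_le hj with rfl | hjk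
    · simp
    have h := dom_count (p := fun u : Fin (m+1) => 3*j ≤ u.val)
      (S := Finset.univ.filter fun v : Fin (m+1) => 3*j + 1 ≤ v.val) (pN m) hdom
      ?_ (pN_card m) (pN_mem m)
    · rw [card_filter_le_val] at h
      omega
    · intro u _ v hv hrel
      rw [Finset.mem_filter] at hv
      rcases hrel with rfl | hadj
      · omega
      · rw [pathGraph_adj] at hadj; omega
  -- exact count on initial segments
  have hF : ∀ j, j ≤ k → (D.filter fun u : Fin (m+1) => u.val < 3*j).card = j := by
    intro j hj
    have hsplit := Finset.card_filter_add_card_filter_not (s := D)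
      (p := fun u : Fin (m+1) => u.val < 3*j)
    have hneg : (D.filter fun u : Fin (m+1) => ¬ u.val < 3*j)
        = D.filter fun u : Fin (m+1) => 3*j ≤ u.val := by
      apply Finset.filter_congr; intro v _; simp [not_lt]
    have := hlow j hj
    have := hupp j hj
    rw [hneg] at hsplit
    omega
  -- blocks have exactly one element
  have hblock : ∀ j, j < k → ∃ a : Fin (m+1),
      (D.filter fun u : Fin (m+1) => 3*j ≤ u.val ∧ u.val < 3*j+3) = {a} := by
    intro j hj
    rw [← Finset.card_eq_one]
    have hsplit := Finset.card_filter_add_card_filter_not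
      (s := D.filter fun u : Fin (m+1) => u.val < 3*(j+1))
      (p := fun u : Fin (m+1) => u.val < 3*j)
    rw [Finset.filter_filter, Finset.filter_filter] at hsplit
    have e1 : (D.filter fun u : Fin (m+1) => u.val < 3*(j+1) ∧ u.val < 3*j)
        = D.filter fun u : Fin (m+1) => u.val < 3*j := by
      apply Finset.filter_congr; intro v _; omega
    have e2 : (D.filter fun u : Fin (m+1) => u.val < 3*(j+1) ∧ ¬ u.val < 3*j)
        = D.filter fun u : Fin (m+1) => 3*j ≤ u.val ∧ u.val < 3*j+3 := by
      apply Finset.filter_congr; intro v _; omega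
    rw [e1, e2, hF j (by omega), hF (j+1) (by omega)] at hsplit
    omega
  choose! u hu using hblock
  have hmemD : ∀ j, j < k → u j ∈ D ∧ 3*j ≤ (u j).val ∧ (u j).val < 3*j+3 := by
    intro j hj
    have : u j ∈ (D.filter fun u : Fin (m+1) => 3*j ≤ u.val ∧ u.val < 3*j+3) := by
      rw [hu j hj]; exact Finset.mem_singleton_self _
    rw [Finset.mem_filter] at this
    exact ⟨this.1, this.2⟩
  have huniqb : ∀ j, j < k → ∀ w ∈ D, 3*j ≤ w.val → w.val < 3*j+3 → w = u j := by
    intro j hj w hw h1 h2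
    have : w ∈ (D.filter fun u : Fin (m+1) => 3*j ≤ u.val ∧ u.val < 3*j+3) :=
      Finset.mem_filter.mpr ⟨hw, h1, h2⟩
    rw [hu j hj] at this
    exact Finset.mem_singleton.mp this
  -- claim A : never the first element of a block
  have hA : ∀ d j, j < k → k - j ≤ d + 1 → (u j).val ≠ 3*j := by
    intro d
    induction d with
    | zero =>
      intro j hj hd heq
      obtain ⟨w, hw, hrel⟩ := path_dominator hdom ⟨3*j+2, by omega⟩
      simp only [Fin.val_mk] at hrel
      have hwlt := w.isLt
      have hw2 : w = u j := huniqb j hj w hw (by omega) (by omega)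
      rw [hw2] at hrel
      omega
    | succ d ih =>
      intro j hj hd heq
      rcases Nat.lt_or_ge (k - j) (d + 2) with hlt | hge
      · exact ih j hj (by omega) heq
      have hj1 : j + 1 < k := by omega
      obtain ⟨w, hw, hrel⟩ := path_dominator hdom ⟨3*j+2, by omega⟩
      simp only [Fin.val_mk] at hrel
      have hwlt := w.isLt
      rcases Nat.lt_or_ge w.val (3*j+3) with hc | hc
      · have hw2 : w = u j := huniqb j hj w hw (by omega) (by omega)
        rw [hw2] at hrel
        omega
      · have hw2 : w = u (j+1) := huniqb (j+1) hj1 w hw (by omega) (by omega)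
        have := ih (j+1) hj1 (by omega)
        rw [hw2] at hrel
        omega
  have hA' : ∀ j, j < k → (u j).val ≠ 3*j := fun j hj => hA k j hj (by omega)
  -- claim B : each block's element is the middle one
  have hB : ∀ j, j < k → (u j).val = 3*j + 1 := by
    intro j
    induction j with
    | zero =>
      intro hj
      obtain ⟨w, hw, hrel⟩ := path_dominator hdom ⟨0, by omega⟩
      simp only [Fin.val_mk] at hrel
      have hw2 : w = u 0 := huniqb 0 hj w hw (by omega) (by omega)
      have := hA' 0 hj
      rw [hw2] at hrel
      omega
    | succ j ih =>
      intro hj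
      have hprev := ih (by omega)
      obtain ⟨w, hw, hrel⟩ := path_dominator hdom ⟨3*j+3, by omega⟩
      simp only [Fin.val_mk] at hrel
      have hwlt := w.isLt
      rcases Nat.lt_or_ge w.val (3*j+3) with hc | hc
      · have hw2 : w = u j := huniqb j (by omega) w hw (by omega) (by omega)
        rw [hw2] at hrel
        omega
      · have hw2 : w = u (j+1) := huniqb (j+1) hj w hw (by omega) (by omega)
        have := hA' (j+1) hj
        rw [hw2] at hrel
        omega
  -- conclude
  have hsub : pset m (fun i => 3*i+1) ⊆ D := by
    intro v hv
    obtain ⟨i, hi, hvi⟩ := Finset.mem_image.mp hv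
    rw [Finset.mem_range] at hi
    have hik : i < k := by omega
    have hv2 : v = u i := by
      have h1 : v.val = 3*i+1 := by
        rw [← hvi]; simp only [Fin.val_mk]; omega
      have h2 := hB i hik
      exact Fin.val_injective (by omega)
    rw [hv2]
    exact (hmemD i hik).1
  exact (Finset.eq_of_subset_of_card_le hsub (by rw [hcard, psetA_card]; omega)).symm


lemma two_n_mod (t n : ℕ) (h : t < 2 * n) :
    (t < n ∧ t % n = t) ∨ (n ≤ t ∧ t % n = t - n) := by
  rcases Nat.lt_or_ge t n with h' | h'
  · exact Or.inl ⟨h', Nat.mod_eq_of_lt h'⟩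
  · refine Or.inr ⟨h', ?_⟩
    rw [Nat.mod_eq_sub_mod h', Nat.mod_eq_of_lt (by omega)]

lemma fin_val_ne_zero {n : ℕ} {a : Fin (n+1)} (h : a ≠ 0) : a.val ≠ 0 := by
  intro h0
  exact h (Fin.ext (by simp [h0]))

lemma fin_sub_val_one {m : ℕ} {A B : Fin (m+3)} (hA : A.val ≠ 0) (hB : B.val ≠ 0) :
    (A - B).val = 1 ↔ A.val = B.val + 1 := by
  have hA' := A.isLt
  have hB' := B.isLt
  rw [Fin.sub_def]
  simp only [Fin.val_mk]
  rcases two_n_mod (m + 3 - B.val + A.val) (m+3) (by omega) with ⟨h1, h2⟩ | ⟨h1, h2⟩ <;>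
    rw [h2] <;> omega

-- adjacency helpers for the cycle
lemma cycle_adj_val {m : ℕ} {u v : Fin (m+3)} (h : (cycleGraph (m+3)).Adj u v) :
    v = u + 1 ∨ v = u - 1 := by
  rw [cycleGraph_adj'] at h
  rcases h with h | h
  · have h1 : u - v = 1 := Fin.ext (by rw [h]; exact (Fin.val_one (m+2)).symm)
    right; rw [← h1]; abel
  · have h1 : v - u = 1 := Fin.ext (by rw [h]; exact (Fin.val_one (m+2)).symm)
    left; rw [← h1]; abel

lemma cycle_adj_of_val {m : ℕ} {u v : Fin (m+3)} (h : u.val + 1 = v.val) :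
    (cycleGraph (m+3)).Adj u v := by
  have huv : v = u + 1 := by
    apply Fin.ext
    rw [Fin.val_add, Fin.val_one, Nat.mod_eq_of_lt (by have := v.isLt; omega)]
    omega
  rw [cycleGraph_adj']
  right
  rw [huv]
  have : u + 1 - u = 1 := by abel
  rw [this, Fin.val_one]

def cN {m : ℕ} (u : Fin (m+3)) : Finset (Fin (m+3)) := {u, u + 1, u - 1}

lemma cN_card {m : ℕ} (u : Fin (m+3)) : (cN u).card ≤ 3 := by
  have h1 := Finset.card_insert_le u ({u + 1, u - 1} : Finset (Fin (m+3)))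
  have h2 := Finset.card_insert_le (u+1) ({u - 1} : Finset (Fin (m+3)))
  have h3 : ({u - 1} : Finset (Fin (m+3))).card = 1 := Finset.card_singleton _
  simp only [cN]
  omega

lemma cN_mem {m : ℕ} (u v : Fin (m+3)) (h : u = v ∨ (cycleGraph (m+3)).Adj u v) :
    v ∈ cN u := by
  simp only [cN, Finset.mem_insert, Finset.mem_singleton]
  rcases h with rfl | h
  · exact Or.inl rfl
  · rcases cycle_adj_val h with h | h
    · exact Or.inr (Or.inl h)
    · exact Or.inr (Or.inr h)

lemma path_isDomSet_cycle {m : ℕ} {D : Finset (Fin (m+3))}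
    (h : IsDomSet (pathGraph (m+3)) D) : IsDomSet (cycleGraph (m+3)) D := by
  intro v
  obtain ⟨u, hu, hrel⟩ := h v
  refine ⟨u, hu, ?_⟩
  rcases hrel with rfl | hadj
  · exact Or.inl rfl
  · right
    rw [pathGraph_adj] at hadj
    rcases hadj with h' | h'
    · exact cycle_adj_of_val h'
    · exact ((cycle_adj_of_val h').symm)

-- the isomorphism between the vertex-deleted cycle and the path
def cycIso (m : ℕ) (x : Fin (m+3)) : vdel (cycleGraph (m+3)) x ≃g pathGraph (m+2) where
  toFun u := ⟨(u.val - x).val - 1, by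
    have h1 := (u.val - x).isLt
    have h2 : (u.val - x).val ≠ 0 := fin_val_ne_zero (sub_ne_zero.mpr u.property)
    omega⟩
  invFun i := ⟨x + ⟨i.val + 1, Nat.succ_lt_succ i.isLt⟩, by
    intro h
    have h2 := add_eq_left.mp h
    rw [Fin.ext_iff] at h2
    simp only [Fin.val_mk, Fin.val_zero] at h2
    exact Nat.succ_ne_zero _ h2⟩
  left_inv := by
    intro u
    have hx := x.isLt
    have hu := (u.val : Fin (m+3)).isLt
    have hne : (u.val : Fin (m+3)).val ≠ x.val := fun h => u.property (Fin.ext h)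
    apply Subtype.ext
    apply Fin.ext
    simp only [Fin.val_add, Fin.sub_def, Fin.val_mk]
    set t := (m + 3 - x.val + (u.val : Fin (m+3)).val) % (m+3) with ht
    have htv := two_n_mod (m + 3 - x.val + (u.val : Fin (m+3)).val) (m+3) (by omega)
    rw [← ht] at htv
    clear_value t
    have h0 : t ≠ 0 := by rcases htv with ⟨h1, h2⟩ | ⟨h1, h2⟩ <;> omega
    have ht1 : t < m + 3 := by rcases htv with ⟨h1, h2⟩ | ⟨h1, h2⟩ <;> omega
    rw [show t - 1 + 1 = t from by omega]
    rcases Nat.lt_or_ge (x.val + t) (m+3) with h1 | h1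
    · rw [Nat.mod_eq_of_lt h1]; rcases htv with ⟨h2, h3⟩ | ⟨h2, h3⟩ <;> omega
    · rw [Nat.mod_eq_sub_mod h1, Nat.mod_eq_of_lt (by omega)]
      rcases htv with ⟨h2, h3⟩ | ⟨h2, h3⟩ <;> omega
  right_inv := by
    intro i
    have hx := x.isLt
    have hi := i.isLt
    apply Fin.ext
    simp only [Fin.val_add, Fin.sub_def, Fin.val_mk]
    set s := (x.val + (i.val + 1)) % (m+3) with hs
    have hsv := two_n_mod (x.val + (i.val + 1)) (m+3) (by omega)
    rw [← hs] at hsv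
    clear_value s
    have hs1 : s < m + 3 := by rcases hsv with ⟨h1, h2⟩ | ⟨h1, h2⟩ <;> omega
    rcases Nat.lt_or_ge (m + 3 - x.val + s) (m+3) with h1 | h1
    · rw [Nat.mod_eq_of_lt h1]; rcases hsv with ⟨h2, h3⟩ | ⟨h2, h3⟩ <;> omega
    · rw [Nat.mod_eq_sub_mod h1, Nat.mod_eq_of_lt (by omega)]
      rcases hsv with ⟨h2, h3⟩ | ⟨h2, h3⟩ <;> omega
  map_rel_iff' := by
    intro u v
    simp only [Equiv.coe_fn_mk]
    show (pathGraph (m+2)).Adj _ _ ↔ (cycleGraph (m+3)).Adj u.val v.val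
    have hu : (u.val - x).val ≠ 0 := fin_val_ne_zero (sub_ne_zero.mpr u.property)
    have hv : (v.val - x).val ≠ 0 := fin_val_ne_zero (sub_ne_zero.mpr v.property)
    have hu' := (u.val - x).isLt
    have hv' := (v.val - x).isLt
    rw [pathGraph_adj, cycleGraph_adj']
    have e1 : u.val - v.val = (u.val - x) - (v.val - x) := (sub_sub_sub_cancel_right _ _ _).symm
    have e2 : v.val - u.val = (v.val - x) - (u.val - x) := (sub_sub_sub_cancel_right _ _ _).symm
    rw [e1, e2, fin_sub_val_one hu hv, fin_sub_val_one hv hu]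
    simp only [Fin.val_mk]
    omega

lemma cycle_lower {m : ℕ} {D : Finset (Fin (m+3))} (hD : IsDomSet (cycleGraph (m+3)) D) :
    m + 3 ≤ 3 * D.card := by
  have h := dom_count (p := fun _ => True) (S := Finset.univ) cN hD
    (fun _ _ _ _ _ => trivial) cN_card cN_mem
  simpa using h

lemma cycle_domNum (m : ℕ) : domNum (cycleGraph (m+3)) = (m+5)/3 := by
  apply le_antisymm
  · exact Nat.sInf_le ⟨pset (m+2) (fun i => 3*i+1), path_isDomSet_cycle (psetA_dom (m+2)),
      by have := psetA_card (m+2); omega⟩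
  · refine le_csInf ⟨(m+5)/3, ?_⟩ ?_
    · exact ⟨pset (m+2) (fun i => 3*i+1), path_isDomSet_cycle (psetA_dom (m+2)),
        by have := psetA_card (m+2); omega⟩
    · rintro b ⟨D, hD, rfl⟩
      have := cycle_lower hD
      omega


end aux

theorem hypoUD_cycle (n : ℕ) (hn : 3 ≤ n) :
    HypoUD (cycleGraph n) ↔ n % 3 = 1 := by
  obtain ⟨m, rfl⟩ : ∃ m, n = m + 3 := ⟨n - 3, by omega⟩
  constructor
  · rintro ⟨-, huniq⟩
    by_contra hmod
    obtain ⟨D₀, -, hun⟩ := existsUnique_gammaSet_of_iso (cycIso m 0) (huniq 0)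
    have e1 := hun _ (psetA_gamma (m+1))
    have e2 := hun _ (psetB_gamma (m+1) (by omega))
    exact psetB_ne_psetA (m+1) (by omega) (e2.trans e1.symm)
  · intro hmod
    constructor
    · refine ⟨pset (m+2) (fun i => 3*i+1), pset (m+2) (fun i => 3*i), ?_, ?_, ?_⟩
      · exact ⟨path_isDomSet_cycle (psetA_dom (m+2)),
          by rw [cycle_domNum]; have := psetA_card (m+2); omega⟩
      · exact ⟨path_isDomSet_cycle (psetB_dom (m+2) (by omega)),
          by rw [cycle_domNum]; have := psetB_card (m+2) (by omega); omega⟩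
      · exact (psetB_ne_psetA (m+2) (by omega)).symm
    · intro x
      exact existsUnique_gammaSet_of_iso (cycIso m x).symm
        (path_unique (m+1) (by omega) (by omega))
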